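/- Let q be a landmark of a STRIPS planning problem P that does not hold in the initial state, and let p₁, …, p_k be atoms such that every action a with q ∈ eff⁺_a has at least one pᵢ ∈ pre_a. Then the disjunction p₁ ∨ ⋯ ∨ p_k is a disjunctive landmark of P, i.e., for every solution plan, some state of the induced trajectory satisfies at least one pᵢ. -/

import Mathlib

structure Act (Atom : Type*) where
  pre : Set Atom
  addEff : Set Atom
  delEff : Set Atom

structure Prob (Atom : Type*) where
  I : Set Atom
  G : Set Atom
  acts : Set (Act Atom)

/-- STRIPS successor state: s' = (s \ eff⁻) ∪ eff⁺. -/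
def stripsSucc {Atom : Type*} (s : Set Atom) (a : Act Atom) : Set Atom :=
  (s \ a.delEff) ∪ a.addEff

/-- Each action in the plan is applicable in the state where it is applied. -/
def validFrom {Atom : Type*} (s : Set Atom) : List (Act Atom) → Prop
  | [] => True
  | a :: rest => a.pre ⊆ s ∧ validFrom (stripsSucc s a) rest

/-- A plan solves P iff its actions belong to P, are applicable along the way,
and the goal holds in the final state. -/
def Solves {Atom : Type*} (P : Prob Atom) (π : List (Act Atom)) : Prop :=
  (∀ a ∈ π, a ∈ P.acts) ∧ validFrom P.I π ∧ P.G ⊆ π.foldl stripsSucc P.I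

/-- The trajectory of states induced by executing plan π from the initial state. -/
def traj {Atom : Type*} (P : Prob Atom) (π : List (Act Atom)) : List (Set Atom) :=
  List.scanl stripsSucc P.I π

/-- An atom is a landmark iff it holds in some state of every solution trajectory. -/
def IsLandmark {Atom : Type*} (P : Prob Atom) (p : Atom) : Prop :=
  ∀ π, Solves P π → ∃ s ∈ traj P π, p ∈ s

/-- Disjunctive landmark rule: if q is a landmark not holding initially and every
action adding q has some pᵢ among the given atoms as a precondition, then every
solution trajectory contains a state satisfying at least one pᵢ. -/
theorem disjunctive_landmark {Atom : Type*} (P : Prob Atom) (q : Atom)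
    (ps : List Atom)
    (hq : IsLandmark P q) (hq0 : q ∉ P.I)
    (hpre : ∀ a ∈ P.acts, q ∈ a.addEff → ∃ p ∈ ps, p ∈ a.pre) :
    ∀ π, Solves P π → ∃ s ∈ traj P π, ∃ p ∈ ps, p ∈ s := by
  have key : ∀ (π : List (Act Atom)) (s : Set Atom),
      (∀ a ∈ π, a ∈ P.acts) → validFrom s π → q ∉ s →
      (∃ t ∈ List.scanl stripsSucc s π, q ∈ t) →
      ∃ t ∈ List.scanl stripsSucc s π, ∃ p ∈ ps, p ∈ t := by
    intro π
    induction π with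
    | nil =>
      intro s _ _ hqs ⟨t, ht, hqt⟩
      simp only [List.scanl_nil, List.mem_singleton] at ht
      exact absurd (ht ▸ hqt) hqs
    | cons a π ih =>
      intro s hacts hvalid hqs hex
      by_cases hq' : q ∈ stripsSucc s a
      · have hqa : q ∈ a.addEff := by
          rcases hq' with h | h
          · exact absurd h.1 hqs
          · exact h
        obtain ⟨p, hp, hppre⟩ := hpre a (hacts a (by simp)) hqa
        exact ⟨s, by simp [List.scanl], p, hp, hvalid.1 hppre⟩
      · obtain ⟨t, ht, hqt⟩ := hex
        simp only [List.scanl_cons, List.mem_cons] at ht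
        rcases ht with rfl | ht
        · exact absurd hqt hqs
        · obtain ⟨t', ht', p, hp, hpt'⟩ :=
            ih (stripsSucc s a) (fun b hb => hacts b (by simp [hb]))
              hvalid.2 hq' ⟨t, ht, hqt⟩
          exact ⟨t', by simp [List.scanl_cons, ht'], p, hp, hpt'⟩
  intro π hsol
  exact key π P.I hsol.1 hsol.2.1 hq0 (hq π hsol)
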